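/- On the six-dimensional real Lie algebra of vector fields on ℝ³ (coordinates t, x, u) spanned by P^t = ∂_t, P^x = ∂_x, D^t = t∂_t − u∂_u, D^x = x∂_x + u∂_u, G = t∂_x + ∂_u, Π = t²∂_t + tx∂_x + (x − tu)∂_u, the nonzero Lie bracket relations are: [P^t,D^t] = P^t, [D^t,Π] = Π, [P^t,Π] = 2D^t + D^x, [P^x,D^x] = P^x, [P^x,Π] = G, [P^t,G] = P^x, [D^t,G] = G, [G,D^x] = G, and all other brackets of distinct basis elements vanish. -/

import Mathlib

noncomputable def br (V W : ℝ × ℝ × ℝ → ℝ × ℝ × ℝ) : ℝ × ℝ × ℝ → ℝ × ℝ × ℝ :=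
  fun p => fderiv ℝ W p (V p) - fderiv ℝ V p (W p)

noncomputable def Pt : ℝ × ℝ × ℝ → ℝ × ℝ × ℝ := fun _ => (1, 0, 0)
noncomputable def Px : ℝ × ℝ × ℝ → ℝ × ℝ × ℝ := fun _ => (0, 1, 0)
noncomputable def Dt : ℝ × ℝ × ℝ → ℝ × ℝ × ℝ := fun p => (p.1, 0, -p.2.2)
noncomputable def Dx : ℝ × ℝ × ℝ → ℝ × ℝ × ℝ := fun p => (0, p.2.1, p.2.2)
noncomputable def Gv : ℝ × ℝ × ℝ → ℝ × ℝ × ℝ := fun p => (0, p.1, 1)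
noncomputable def Pi' : ℝ × ℝ × ℝ → ℝ × ℝ × ℝ :=
  fun p => (p.1 ^ 2, p.1 * p.2.1, p.2.1 - p.1 * p.2.2)

section helpers

lemma hf (p : ℝ × ℝ × ℝ) : HasFDerivAt (fun q : ℝ × ℝ × ℝ => q.1)
    (ContinuousLinearMap.fst ℝ ℝ (ℝ × ℝ)) p := hasFDerivAt_fst

lemma hx (p : ℝ × ℝ × ℝ) : HasFDerivAt (fun q : ℝ × ℝ × ℝ => q.2.1)
    ((ContinuousLinearMap.fst ℝ ℝ ℝ).comp (ContinuousLinearMap.snd ℝ ℝ (ℝ × ℝ))) p :=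
  (hasFDerivAt_snd).fst

lemma hu (p : ℝ × ℝ × ℝ) : HasFDerivAt (fun q : ℝ × ℝ × ℝ => q.2.2)
    ((ContinuousLinearMap.snd ℝ ℝ ℝ).comp (ContinuousLinearMap.snd ℝ ℝ (ℝ × ℝ))) p :=
  (hasFDerivAt_snd).snd

lemma fderiv_Pt (p v : ℝ × ℝ × ℝ) : fderiv ℝ Pt p v = 0 := by
  unfold Pt
  rw [fderiv_fun_const]
  rfl

lemma fderiv_Px (p v : ℝ × ℝ × ℝ) : fderiv ℝ Px p v = 0 := by
  unfold Px
  rw [fderiv_fun_const]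
  rfl

lemma fderiv_Dt (p v : ℝ × ℝ × ℝ) : fderiv ℝ Dt p v = (v.1, 0, -v.2.2) := by
  have h : HasFDerivAt Dt
      ((ContinuousLinearMap.fst ℝ ℝ (ℝ × ℝ)).prod
        (((0 : (ℝ × ℝ × ℝ) →L[ℝ] ℝ)).prod
          (-((ContinuousLinearMap.snd ℝ ℝ ℝ).comp (ContinuousLinearMap.snd ℝ ℝ (ℝ × ℝ)))))) p :=
    (hf p).prodMk ((hasFDerivAt_const (0:ℝ) p).prodMk (hu p).neg)
  rw [h.fderiv]; rfl

lemma fderiv_Dx (p v : ℝ × ℝ × ℝ) : fderiv ℝ Dx p v = (0, v.2.1, v.2.2) := by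
  have h : HasFDerivAt Dx
      (((0 : (ℝ × ℝ × ℝ) →L[ℝ] ℝ)).prod
        (((ContinuousLinearMap.fst ℝ ℝ ℝ).comp (ContinuousLinearMap.snd ℝ ℝ (ℝ × ℝ))).prod
          ((ContinuousLinearMap.snd ℝ ℝ ℝ).comp (ContinuousLinearMap.snd ℝ ℝ (ℝ × ℝ))))) p :=
    (hasFDerivAt_const (0:ℝ) p).prodMk ((hx p).prodMk (hu p))
  rw [h.fderiv]; rfl

lemma fderiv_Gv (p v : ℝ × ℝ × ℝ) : fderiv ℝ Gv p v = (0, v.1, 0) := by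
  have h : HasFDerivAt Gv
      (((0 : (ℝ × ℝ × ℝ) →L[ℝ] ℝ)).prod
        ((ContinuousLinearMap.fst ℝ ℝ (ℝ × ℝ)).prod (0 : (ℝ × ℝ × ℝ) →L[ℝ] ℝ))) p :=
    (hasFDerivAt_const (0:ℝ) p).prodMk ((hf p).prodMk (hasFDerivAt_const (1:ℝ) p))
  rw [h.fderiv]; rfl

lemma fderiv_Pi (p v : ℝ × ℝ × ℝ) :
    fderiv ℝ Pi' p v =
      (2 * p.1 * v.1, p.1 * v.2.1 + p.2.1 * v.1, v.2.1 - (p.1 * v.2.2 + p.2.2 * v.1)) := by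
  have hPi : Pi' = fun q : ℝ × ℝ × ℝ => (q.1 * q.1, q.1 * q.2.1, q.2.1 - q.1 * q.2.2) := by
    funext q; simp [Pi', sq]
  rw [hPi]
  have h1 : HasFDerivAt (fun q : ℝ × ℝ × ℝ => q.1 * q.1) _ p := (hf p).mul (hf p)
  have h2 : HasFDerivAt (fun q : ℝ × ℝ × ℝ => q.1 * q.2.1) _ p := (hf p).mul (hx p)
  have h3 : HasFDerivAt (fun q : ℝ × ℝ × ℝ => q.2.1 - q.1 * q.2.2) _ p :=
    (hx p).sub ((hf p).mul (hu p))
  have h := h1.prodMk (h2.prodMk h3)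
  rw [h.fderiv]
  simp [ContinuousLinearMap.prod_apply]
  ring_nf

end helpers

theorem commutation_relations :
    br Pt Dt = Pt ∧
    br Dt Pi' = Pi' ∧
    br Pt Pi' = (fun p => (2 : ℝ) • Dt p + Dx p) ∧
    br Px Dx = Px ∧
    br Px Pi' = Gv ∧
    br Pt Gv = Px ∧
    br Dt Gv = Gv ∧
    br Gv Dx = Gv ∧
    br Pt Px = 0 ∧
    br Pt Dx = 0 ∧
    br Px Dt = 0 ∧
    br Px Gv = 0 ∧
    br Dt Dx = 0 ∧
    br Dx Pi' = 0 ∧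
    br Gv Pi' = 0 := by
  refine ⟨?_, ?_, ?_, ?_, ?_, ?_, ?_, ?_, ?_, ?_, ?_, ?_, ?_, ?_, ?_⟩ <;>
  · funext p
    simp only [br, fderiv_Pt, fderiv_Px, fderiv_Dt, fderiv_Dx, fderiv_Gv, fderiv_Pi,
      Pt, Px, Dt, Dx, Gv, Pi', Pi.zero_apply, Prod.smul_mk, smul_eq_mul]
    refine Prod.ext ?_ (Prod.ext ?_ ?_) <;> simp <;> ring
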